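/- arXiv:2603.00671 — 4 statements merged into one kernel-verified Lean document; each statement's English description precedes it below -/
import Mathlib

section
/- Let p and l be real constants with l + 2 > 0 and p < l + 3/2. Then there exists a constant C > 0 such that for every function φ ∈ C^{2+ν}(ℝ) with 0 < ν < 1, one has sup_{x∈ℝ} |φ'(x)| ≤ C (∫_ℝ |φ'(x)|^{2(l-p+2)} dx)^{1/(2(l+2))} (∫_ℝ |φ'(x)|^{2(p-1)} |φ''(x)|^2 dx)^{1/(2(l+2))}, provided both integrals on the right-hand side are finite. -/
set_option maxHeartbeats 1000000

open MeasureTheory Real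
open scoped ENNReal NNReal

lemma helper_add_rpow {a b r : ℝ} (ha : 0 ≤ a) (hb : 0 ≤ b) (hr : 0 ≤ r) :
    (a + b) ^ r ≤ 2 ^ r * (a ^ r + b ^ r) := by
  have h1 : a + b ≤ 2 * max a b := by
    rcases le_total a b with h | h
    · rw [max_eq_right h]; linarith
    · rw [max_eq_left h]; linarith
  calc (a + b) ^ r ≤ (2 * max a b) ^ r :=
        Real.rpow_le_rpow (by positivity) h1 hr
    _ = 2 ^ r * (max a b) ^ r := Real.mul_rpow (by norm_num) (le_max_of_le_left ha)
    _ ≤ 2 ^ r * (a ^ r + b ^ r) := by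
        have h2 : (max a b) ^ r ≤ a ^ r + b ^ r := by
          rcases le_total a b with h | h
          · rw [max_eq_right h]
            have := Real.rpow_nonneg ha r; linarith
          · rw [max_eq_left h]
            have := Real.rpow_nonneg hb r; linarith
        have h3 : (0:ℝ) ≤ 2 ^ r := by positivity
        nlinarith [Real.rpow_nonneg (show (0:ℝ) ≤ 2 by norm_num) r]

lemma helper_sq_abs_rpow (x c : ℝ) : (x ^ 2) ^ c = |x| ^ (2 * c) := by
  rw [← sq_abs, ← Real.rpow_natCast |x| 2, ← Real.rpow_mul (abs_nonneg x)]
  norm_num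

/-- Key pointwise-sup estimate. -/
lemma key_sup {s : ℝ} (hs : 0 < s) (u w fg : ℝ → ℝ)
    (hu : ∀ x, HasDerivAt u (w x) x) (hw : Continuous w)
    (hfg0 : ∀ x, 0 ≤ fg x) (hfgi : Integrable fg)
    (hb : ∀ x, u x ≠ 0 → |u x| ^ (s - 1) * |w x| ≤ fg x)
    (hsmall : ∀ ε, 0 < ε → ∀ x₀ : ℝ, ∃ y < x₀, |u y| < ε) :
    ∀ x₀, |u x₀| ^ s ≤ (s * 2 ^ s) * ∫ x, fg x := by
  intro x₀
  have hu_cont : Continuous u := by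
    refine continuous_iff_continuousAt.2 fun x => (hu x).continuousAt
  set J : ℝ := ∫ x, fg x with hJdef
  have hJ0 : 0 ≤ J := integral_nonneg hfg0
  set c1 : ℝ := s * 2 ^ s with hc1def
  have hc1pos : 0 < c1 := by positivity
  set c2 : ℝ := if s ≤ 2 then 0 else c1 with hc2def
  have hc2_nonneg : 0 ≤ c2 := by
    rw [hc2def]; split_ifs
    · exact le_refl 0
    · positivity
  -- main estimate for fixed δ and suitable y
  refine le_of_forall_pos_le_add fun η hη => ?_
  -- choose ε
  set ε : ℝ := (η / 2) ^ (1 / s) with hεdef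
  have hεpos : 0 < ε := Real.rpow_pos_of_pos (by linarith) _
  have hεs : ε ^ s = η / 2 := by
    rw [hεdef, ← Real.rpow_mul (by linarith : (0:ℝ) ≤ η / 2), one_div,
      inv_mul_cancel₀ hs.ne', Real.rpow_one]
  obtain ⟨y, hy, huy⟩ := hsmall ε hεpos x₀
  set M : ℝ := ∫ t in y..x₀, |w t| with hMdef
  have hM0 : 0 ≤ M := intervalIntegral.integral_nonneg hy.le (fun t _ => abs_nonneg _)
  -- the δ-dependent bound
  have main : ∀ δ : ℝ, 0 < δ →
      |u x₀| ^ s ≤ (ε ^ 2 + δ) ^ (s / 2) + c1 * J + c2 * (Real.sqrt δ) ^ (s - 1) * M := by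
    intro δ hδ
    set d : ℝ → ℝ := fun t => 2 * u t ^ 1 * w t * (s / 2) * (u t ^ 2 + δ) ^ (s / 2 - 1)
      with hddef
    have hGpos : ∀ t, (0:ℝ) < u t ^ 2 + δ := fun t => by positivity
    have hF : ∀ t : ℝ, HasDerivAt (fun x => (u x ^ 2 + δ) ^ (s / 2)) (d t) t := by
      intro t
      have h1 : HasDerivAt (fun x => u x ^ 2 + δ) (2 * u t ^ 1 * w t) t := by
        simpa using (((hu t).pow 2).add_const δ)
      exact h1.rpow_const (Or.inl (hGpos t).ne')
    have hd_cont : Continuous d := by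
      refine (((continuous_const.mul (hu_cont.pow 1)).mul hw).mul continuous_const).mul ?_
      exact ((hu_cont.pow 2).add continuous_const).rpow_const fun t => Or.inl (hGpos t).ne'
    -- pointwise bound
    have claim : ∀ t, d t ≤ c1 * fg t + c2 * (Real.sqrt δ) ^ (s - 1) * |w t| := by
      intro t
      have habs : d t ≤ s * (|u t| * |w t| * (u t ^ 2 + δ) ^ (s / 2 - 1)) := by
        have h0 : d t ≤ |d t| := le_abs_self _
        refine h0.trans (le_of_eq ?_)
        rw [hddef]
        simp only [abs_mul, abs_pow, pow_one]
        rw [abs_of_pos (Real.rpow_pos_of_pos (hGpos t) _),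
          abs_of_pos (by linarith : (0:ℝ) < s / 2)]
        rw [abs_two]; ring
      refine habs.trans ?_
      by_cases hs2 : s ≤ 2
      · have hc2z : c2 = 0 := by rw [hc2def, if_pos hs2]
        rw [hc2z]
        by_cases hut : u t = 0
        · simp only [hut, abs_zero, zero_mul, mul_zero]
          have := hfg0 t
          nlinarith
        · have hupos : 0 < |u t| := abs_pos.2 hut
          have h1 : (u t ^ 2 + δ) ^ (s / 2 - 1) ≤ (u t ^ 2) ^ (s / 2 - 1) := by
            refine Real.rpow_le_rpow_of_nonpos (by positivity) (by linarith) ?_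
            linarith
          have h2 : (u t ^ 2) ^ (s / 2 - 1) = |u t| ^ (s - 2) := by
            rw [helper_sq_abs_rpow]; ring_nf
          have h3 : |u t| * (|u t| ^ (s - 2)) = |u t| ^ (s - 1) := by
            nth_rewrite 1 [← Real.rpow_one |u t|]
            rw [← Real.rpow_add hupos]; ring_nf
          have h4 : s * (|u t| * |w t| * (u t ^ 2 + δ) ^ (s / 2 - 1))
              ≤ s * (|u t| ^ (s - 1) * |w t|) := by
            rw [← h3]
            have := abs_nonneg (w t)
            have h5 : |u t| * |w t| * (u t ^ 2 + δ) ^ (s / 2 - 1)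
                ≤ |u t| * |u t| ^ (s - 2) * |w t| := by
              rw [h2] at h1
              nlinarith [mul_le_mul_of_nonneg_left h1
                (mul_nonneg (abs_nonneg (u t)) (abs_nonneg (w t)))]
            nlinarith
          refine h4.trans ?_
          have h6 := hb t hut
          have h7 : (1:ℝ) ≤ 2 ^ s := Real.one_le_rpow (by norm_num) hs.le
          have h8 : s ≤ c1 := by rw [hc1def]; nlinarith
          have h9 : 0 ≤ |u t| ^ (s - 1) * |w t| := by positivity
          simp only [zero_mul, add_zero]
          nlinarith
      · -- s > 2 case
        push_neg at hs2
        have hc2c1 : c2 = c1 := by rw [hc2def, if_neg (not_le.2 hs2)]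
        rw [hc2c1]
        have hG : 0 < u t ^ 2 + δ := hGpos t
        have hsq : Real.sqrt δ ^ 2 = δ := Real.sq_sqrt hδ.le
        have hδs : 0 ≤ Real.sqrt δ := Real.sqrt_nonneg δ
        -- |u t| ≤ (u t ^2 + δ)^(1/2)
        have h1 : |u t| ≤ (u t ^ 2 + δ) ^ ((1:ℝ)/2) := by
          have : |u t| = (u t ^ 2) ^ ((1:ℝ)/2) := by
            rw [helper_sq_abs_rpow]; norm_num
          rw [this]
          exact Real.rpow_le_rpow (by positivity) (by linarith) (by norm_num)
        have h2 : (u t ^ 2 + δ) ^ ((1:ℝ)/2) * (u t ^ 2 + δ) ^ (s / 2 - 1)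
            = (u t ^ 2 + δ) ^ ((s - 1) / 2) := by
          rw [← Real.rpow_add hG]; ring_nf
        have h3 : (u t ^ 2 + δ) ^ ((s - 1) / 2) ≤ (|u t| + Real.sqrt δ) ^ (s - 1) := by
          have hbase : u t ^ 2 + δ ≤ (|u t| + Real.sqrt δ) ^ 2 := by
            have h4 : u t ^ 2 = |u t| ^ 2 := (sq_abs _).symm
            nlinarith [abs_nonneg (u t)]
          calc (u t ^ 2 + δ) ^ ((s - 1) / 2)
              ≤ ((|u t| + Real.sqrt δ) ^ 2) ^ ((s - 1) / 2) :=
                Real.rpow_le_rpow hG.le hbase (by linarith)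
            _ = (|u t| + Real.sqrt δ) ^ (s - 1) := by
                rw [helper_sq_abs_rpow, abs_of_nonneg (by positivity)]; ring_nf
        have h5 : (|u t| + Real.sqrt δ) ^ (s - 1)
            ≤ 2 ^ (s - 1) * (|u t| ^ (s - 1) + Real.sqrt δ ^ (s - 1)) :=
          helper_add_rpow (abs_nonneg _) hδs (by linarith)
        have h6 : |u t| ^ (s - 1) * |w t| ≤ fg t := by
          by_cases hut : u t = 0
          · rw [hut, abs_zero, Real.zero_rpow (by linarith : s - 1 ≠ 0), zero_mul]
            exact hfg0 t
          · exact hb t hut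
        have h7 : (2:ℝ) ^ (s - 1) ≤ 2 ^ s :=
          Real.rpow_le_rpow_of_exponent_le (by norm_num) (by linarith)
        -- combine
        have h8 : s * (|u t| * |w t| * (u t ^ 2 + δ) ^ (s / 2 - 1))
            ≤ s * ((|u t| + Real.sqrt δ) ^ (s - 1) * |w t|) := by
          have h9 : |u t| * (u t ^ 2 + δ) ^ (s / 2 - 1)
              ≤ (|u t| + Real.sqrt δ) ^ (s - 1) := by
            calc |u t| * (u t ^ 2 + δ) ^ (s / 2 - 1)
                ≤ (u t ^ 2 + δ) ^ ((1:ℝ)/2) * (u t ^ 2 + δ) ^ (s / 2 - 1) := by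
                  have := Real.rpow_pos_of_pos hG (s / 2 - 1)
                  nlinarith
              _ = (u t ^ 2 + δ) ^ ((s - 1) / 2) := h2
              _ ≤ _ := h3
          have h9w := mul_le_mul_of_nonneg_right h9 (abs_nonneg (w t))
          nlinarith [h9w]
        refine h8.trans ?_
        have h10 : (0:ℝ) ≤ 2 ^ (s - 1) := by positivity
        have h11 : 0 ≤ |w t| := abs_nonneg _
        have h12 : 0 ≤ |u t| ^ (s - 1) := Real.rpow_nonneg (abs_nonneg _) _
        have h13 : 0 ≤ Real.sqrt δ ^ (s - 1) := Real.rpow_nonneg hδs _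
        have h14 : s * ((|u t| + Real.sqrt δ) ^ (s - 1) * |w t|)
            ≤ s * (2 ^ (s - 1) * (|u t| ^ (s - 1) + Real.sqrt δ ^ (s - 1)) * |w t|) := by
          have h5w := mul_le_mul_of_nonneg_right h5 (abs_nonneg (w t))
          nlinarith [h5w]
        refine h14.trans ?_
        have h15 : s * (2 ^ (s - 1) * (|u t| ^ (s - 1) + Real.sqrt δ ^ (s - 1)) * |w t|)
            = s * 2 ^ (s - 1) * (|u t| ^ (s - 1) * |w t|)
              + s * 2 ^ (s - 1) * (Real.sqrt δ ^ (s - 1) * |w t|) := by ring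
        rw [h15, hc1def]
        have h16 : s * 2 ^ (s - 1) * (|u t| ^ (s - 1) * |w t|) ≤ s * 2 ^ s * fg t := by
          have h12 : 0 ≤ |u t| ^ (s - 1) * |w t| := by positivity
          nlinarith [hfg0 t, mul_le_mul_of_nonneg_left h6 (show (0:ℝ) ≤ s * 2 ^ (s-1) by positivity),
            mul_le_mul_of_nonneg_right h7 h12]
        have h17 : s * 2 ^ (s - 1) * (Real.sqrt δ ^ (s - 1) * |w t|)
            ≤ s * 2 ^ s * Real.sqrt δ ^ (s - 1) * |w t| := by
          nlinarith [mul_le_mul_of_nonneg_right h7 (mul_nonneg h13 h11)]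
        linarith
    -- FTC chain
    have hint_d : IntervalIntegrable d volume y x₀ := hd_cont.intervalIntegrable y x₀
    have hint_fg : IntervalIntegrable (fun t => c1 * fg t) volume y x₀ :=
      (hfgi.intervalIntegrable).const_mul c1
    have hint_w : IntervalIntegrable (fun t => c2 * Real.sqrt δ ^ (s - 1) * |w t|) volume y x₀ :=
      ((hw.abs.intervalIntegrable y x₀)).const_mul _
    have hint_b : IntervalIntegrable
        (fun t => c1 * fg t + c2 * Real.sqrt δ ^ (s - 1) * |w t|) volume y x₀ :=
      hint_fg.add hint_w
    have hFTC : ∫ t in y..x₀, d t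
        = (u x₀ ^ 2 + δ) ^ (s / 2) - (u y ^ 2 + δ) ^ (s / 2) :=
      intervalIntegral.integral_eq_sub_of_hasDerivAt (fun t _ => hF t) hint_d
    have hmono : ∫ t in y..x₀, d t
        ≤ ∫ t in y..x₀, (c1 * fg t + c2 * Real.sqrt δ ^ (s - 1) * |w t|) :=
      intervalIntegral.integral_mono_on hy.le hint_d hint_b (fun t _ => claim t)
    have hsplit : ∫ t in y..x₀, (c1 * fg t + c2 * Real.sqrt δ ^ (s - 1) * |w t|)
        = c1 * (∫ t in y..x₀, fg t) + c2 * Real.sqrt δ ^ (s - 1) * M := by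
      rw [intervalIntegral.integral_add hint_fg hint_w, intervalIntegral.integral_const_mul,
        intervalIntegral.integral_const_mul]
    have hJle : ∫ t in y..x₀, fg t ≤ J := by
      rw [intervalIntegral.integral_of_le hy.le]
      exact setIntegral_le_integral hfgi (Filter.Eventually.of_forall hfg0)
    have hFy : (u y ^ 2 + δ) ^ (s / 2) ≤ (ε ^ 2 + δ) ^ (s / 2) := by
      apply Real.rpow_le_rpow (by positivity) ?_ (by positivity)
      have h1 : u y ^ 2 ≤ ε ^ 2 := by
        rw [← sq_abs]; nlinarith [abs_nonneg (u y)]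
      linarith
    have hx0 : |u x₀| ^ s ≤ (u x₀ ^ 2 + δ) ^ (s / 2) := by
      have he : |u x₀| ^ s = (u x₀ ^ 2) ^ (s / 2) := by
        rw [helper_sq_abs_rpow]; ring_nf
      rw [he]
      exact Real.rpow_le_rpow (by positivity) (by linarith) (by positivity)
    have hc1J := mul_le_mul_of_nonneg_left hJle hc1pos.le
    linarith
  -- limit as δ → 0⁺
  have hval1 : (ε ^ 2 + 0) ^ (s / 2) = η / 2 := by
    rw [add_zero, helper_sq_abs_rpow, abs_of_pos hεpos,
      show 2 * (s / 2) = s by ring, hεs]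
  have hT1 : Filter.Tendsto (fun t : ℝ => (ε ^ 2 + t) ^ (s / 2))
      (nhdsWithin 0 (Set.Ioi 0)) (nhds (η / 2)) := by
    have hcont1 : ContinuousAt (fun t : ℝ => (ε ^ 2 + t) ^ (s / 2)) 0 := by
      apply ContinuousAt.rpow_const
      · exact (continuous_const.add continuous_id).continuousAt
      · left; positivity
    have := hcont1.tendsto
    rw [hval1] at this
    exact this.mono_left nhdsWithin_le_nhds
  have hT2 : Filter.Tendsto (fun t : ℝ => c2 * Real.sqrt t ^ (s - 1) * M)
      (nhdsWithin 0 (Set.Ioi 0)) (nhds 0) := by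
    by_cases hs2 : s ≤ 2
    · have : c2 = 0 := by rw [hc2def, if_pos hs2]
      simp only [this, zero_mul]
      exact tendsto_const_nhds
    · have hs1 : (0:ℝ) < s - 1 := by push_neg at hs2; linarith
      have hcont2 : ContinuousAt (fun t : ℝ => c2 * Real.sqrt t ^ (s - 1) * M) 0 := by
        refine (continuousAt_const.mul ?_).mul continuousAt_const
        have ha : ContinuousAt (fun r : ℝ => r ^ (s - 1)) (Real.sqrt 0) := by
          rw [Real.sqrt_zero]
          exact Real.continuousAt_rpow_const 0 (s - 1) (Or.inr hs1.le)
        exact ha.comp Real.continuous_sqrt.continuousAt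
      have ht := hcont2.tendsto.mono_left
        (nhdsWithin_le_nhds (s := Set.Ioi (0:ℝ)))
      simp only [Real.sqrt_zero, Real.zero_rpow hs1.ne', mul_zero, zero_mul] at ht
      exact ht
  have hT : Filter.Tendsto (fun t : ℝ => (ε ^ 2 + t) ^ (s / 2) + c2 * Real.sqrt t ^ (s - 1) * M)
      (nhdsWithin 0 (Set.Ioi 0)) (nhds (η / 2 + 0)) := hT1.add hT2
  have hev : ∀ᶠ t in nhdsWithin 0 (Set.Ioi 0),
      (ε ^ 2 + t) ^ (s / 2) + c2 * Real.sqrt t ^ (s - 1) * M < η :=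
    hT.eventually_lt_const (by linarith)
  obtain ⟨δ, hδlt, hδpos⟩ := (hev.and eventually_mem_nhdsWithin).exists
  have hmain := main δ hδpos
  linarith

lemma helper_rpow_sq (x c : ℝ) (hx : 0 ≤ x) : (x ^ c) ^ (2:ℕ) = x ^ (2 * c) := by
  rw [← Real.rpow_natCast (x ^ c) 2, ← Real.rpow_mul hx]
  norm_num [mul_comm]

lemma helper_pow_two (x : ℝ) : x ^ (2:ℕ) = x ^ (2:ℝ) := by
  rw [← Real.rpow_natCast x 2]; norm_num

/-- Lemma 2.1: weighted interpolation inequality for `sup |φ'|`. -/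

theorem stmt0 (p l : ℝ) (hl : l + 2 > 0) (hp : p < l + 3 / 2) :
    ∃ C > 0, ∀ (φ : ℝ → ℝ) (ν : ℝ), 0 < ν → ν < 1 →
      ContDiff ℝ 2 φ →
      (∃ K : NNReal, HolderWith K ν.toNNReal (deriv (deriv φ))) →
      Integrable (fun x => |deriv φ x| ^ (2 * (l - p + 2))) →
      Integrable (fun x => |deriv φ x| ^ (2 * (p - 1)) * |deriv (deriv φ) x| ^ (2 : ℝ)) →
      ∀ x : ℝ, |deriv φ x| ≤
        C * (∫ x : ℝ, |deriv φ x| ^ (2 * (l - p + 2))) ^ (1 / (2 * (l + 2))) *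
          (∫ x : ℝ, |deriv φ x| ^ (2 * (p - 1)) * |deriv (deriv φ) x| ^ (2 : ℝ)) ^
            (1 / (2 * (l + 2))) := by
  set s : ℝ := l + 2 with hsdef
  have hs : 0 < s := hl
  refine ⟨(s * 2 ^ s) ^ (1/s), Real.rpow_pos_of_pos (by positivity) _, ?_⟩
  intro φ ν hν hν1 hφ hHolder hA hB x₀
  set u : ℝ → ℝ := deriv φ with hudef
  set w : ℝ → ℝ := deriv (deriv φ) with hwdef
  -- regularity
  have h2 : ContDiff ℝ 1 u := by
    have h21 : ContDiff ℝ (1 + 1 : ℕ) φ := by norm_num; exact hφ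
    exact (contDiff_succ_iff_deriv.mp h21).2.2
  have hu_diff : Differentiable ℝ u := h2.differentiable one_ne_zero
  have hu_cont : Continuous u := hu_diff.continuous
  have hw_cont : Continuous w := h2.continuous_deriv le_rfl
  have hu' : ∀ x, HasDerivAt u (w x) x := fun x => (hu_diff x).hasDerivAt
  -- the two factors
  set f : ℝ → ℝ := fun x => |u x| ^ (l - p + 2) with hfdef
  set g : ℝ → ℝ := fun x => |u x| ^ (p - 1) * |w x| with hgdef
  have hf0 : ∀ x, 0 ≤ f x := fun x => Real.rpow_nonneg (abs_nonneg _) _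
  have hg0 : ∀ x, 0 ≤ g x :=
    fun x => mul_nonneg (Real.rpow_nonneg (abs_nonneg _) _) (abs_nonneg _)
  have hfm : AEStronglyMeasurable f volume := by
    apply Measurable.aestronglyMeasurable
    measurability
  have hgm : AEStronglyMeasurable g volume := by
    apply Measurable.aestronglyMeasurable
    measurability
  -- square identities
  have hfsq : ∀ x, f x ^ (2:ℕ) = |u x| ^ (2 * (l - p + 2)) := by
    intro x
    simp only [hfdef]
    exact helper_rpow_sq _ _ (abs_nonneg _)
  have hgsq : ∀ x, g x ^ (2:ℕ) = |u x| ^ (2 * (p - 1)) * |w x| ^ (2:ℝ) := by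
    intro x
    simp only [hgdef]
    rw [mul_pow, helper_rpow_sq _ _ (abs_nonneg _), helper_pow_two]
  have hmf2 : MemLp f 2 volume := by
    refine (memLp_two_iff_integrable_sq hfm).2 ?_
    exact hA.congr (Filter.Eventually.of_forall fun x => (hfsq x).symm)
  have hmg2 : MemLp g 2 volume := by
    refine (memLp_two_iff_integrable_sq hgm).2 ?_
    exact hB.congr (Filter.Eventually.of_forall fun x => (hgsq x).symm)
  -- product integrable
  have hmul : Integrable (fun x => f x * g x) volume := by
    have hpqr : (1 : ℝ≥0∞) / 1 = 1 / 2 + 1 / 2 := by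
      rw [ENNReal.div_add_div_same]
      norm_num
      rw [ENNReal.div_self] <;> norm_num
    have := (hmg2.smul hmf2 : MemLp (f • g) 1 volume)
    rw [memLp_one_iff_integrable] at this
    exact this.congr (Filter.Eventually.of_forall fun x => by simp [smul_eq_mul])
  -- Cauchy-Schwarz
  have hCS : ∫ x, f x * g x ≤
      (∫ x, |u x| ^ (2 * (l - p + 2))) ^ ((1:ℝ)/2) *
      (∫ x, |u x| ^ (2 * (p - 1)) * |w x| ^ (2:ℝ)) ^ ((1:ℝ)/2) := by
    have hpq : Real.HolderConjugate 2 2 := Real.holderConjugate_iff.mpr ⟨by norm_num, by norm_num⟩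
    have h := integral_mul_le_Lp_mul_Lq_of_nonneg hpq
      (Filter.Eventually.of_forall hf0) (Filter.Eventually.of_forall hg0)
      (by rw [ENNReal.ofReal_ofNat]; exact hmf2)
      (by rw [ENNReal.ofReal_ofNat]; exact hmg2)
    have e1 : ∫ x, f x ^ (2:ℝ) = ∫ x, |u x| ^ (2 * (l - p + 2)) := by
      refine integral_congr_ae (Filter.Eventually.of_forall fun x => ?_)
      show f x ^ (2:ℝ) = |u x| ^ (2 * (l - p + 2))
      rw [← hfsq x]; exact (helper_pow_two (f x)).symm
    have e2 : ∫ x, g x ^ (2:ℝ) = ∫ x, |u x| ^ (2 * (p - 1)) * |w x| ^ (2:ℝ) := by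
      refine integral_congr_ae (Filter.Eventually.of_forall fun x => ?_)
      show g x ^ (2:ℝ) = |u x| ^ (2 * (p - 1)) * |w x| ^ (2:ℝ)
      rw [← hgsq x]; exact (helper_pow_two (g x)).symm
    rw [e1, e2] at h
    exact h
  -- smallness
  have hsmall : ∀ ε, 0 < ε → ∀ x₀' : ℝ, ∃ y < x₀', |u y| < ε := by
    intro ε hε x₀'
    by_contra hcon
    push_neg at hcon
    have hq : (0:ℝ) < 2 * (l - p + 2) := by linarith
    have hsub : Set.Iio x₀' ⊆ {x | ε ^ (2 * (l - p + 2)) ≤ |u x| ^ (2 * (l - p + 2))} :=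
      fun y hy => Real.rpow_le_rpow hε.le (hcon y hy) hq.le
    have hfin : volume {x | ε ^ (2 * (l - p + 2)) ≤ |u x| ^ (2 * (l - p + 2))} < ⊤ :=
      hA.measure_ge_lt_top (Real.rpow_pos_of_pos hε _)
    have hmono : volume (Set.Iio x₀') ≤
        volume {x | ε ^ (2 * (l - p + 2)) ≤ |u x| ^ (2 * (l - p + 2))} :=
      measure_mono hsub
    rw [Real.volume_Iio] at hmono
    exact absurd (hmono.trans_lt hfin) (by simp)
  -- pointwise lower bound hypothesis for key_sup
  have hb : ∀ x, u x ≠ 0 → |u x| ^ (s - 1) * |w x| ≤ f x * g x := by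
    intro x hx
    have hpos : 0 < |u x| := abs_pos.2 hx
    apply le_of_eq
    rw [hfdef, hgdef, ← mul_assoc, ← Real.rpow_add hpos]
    congr 2
    rw [hsdef]; ring
  have hkey := key_sup hs u w (fun x => f x * g x) hu' hw_cont
    (fun x => mul_nonneg (hf0 x) (hg0 x)) hmul hb hsmall x₀
  -- final algebra
  have hA0 : 0 ≤ ∫ x, |u x| ^ (2 * (l - p + 2)) :=
    integral_nonneg fun x => Real.rpow_nonneg (abs_nonneg _) _
  have hB0 : 0 ≤ ∫ x, |u x| ^ (2 * (p - 1)) * |w x| ^ (2:ℝ) :=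
    integral_nonneg fun x =>
      mul_nonneg (Real.rpow_nonneg (abs_nonneg _) _) (Real.rpow_nonneg (abs_nonneg _) _)
  set A : ℝ := ∫ x, |u x| ^ (2 * (l - p + 2)) with hAdef
  set B : ℝ := ∫ x, |u x| ^ (2 * (p - 1)) * |w x| ^ (2:ℝ) with hBdef
  have h1 : |u x₀| ^ s ≤ (s * 2 ^ s) * (A ^ ((1:ℝ)/2) * B ^ ((1:ℝ)/2)) := by
    refine hkey.trans ?_
    exact mul_le_mul_of_nonneg_left hCS (by positivity)
  have habs0 : (0:ℝ) ≤ |u x₀| := abs_nonneg _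
  have h3 := Real.rpow_le_rpow (Real.rpow_nonneg habs0 s) h1
    (by positivity : (0:ℝ) ≤ 1/s)
  have h2 : (|u x₀| ^ s) ^ ((1:ℝ)/s) = |u x₀| := by
    rw [← Real.rpow_mul habs0, mul_one_div, div_self hs.ne', Real.rpow_one]
  rw [h2] at h3
  refine h3.trans (le_of_eq ?_)
  rw [Real.mul_rpow (by positivity)
      (mul_nonneg (Real.rpow_nonneg hA0 _) (Real.rpow_nonneg hB0 _)),
    Real.mul_rpow (Real.rpow_nonneg hA0 _) (Real.rpow_nonneg hB0 _),
    ← Real.rpow_mul hA0, ← Real.rpow_mul hB0]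
  rw [show (1:ℝ)/2 * (1/s) = 1 / (2 * s) by
    rw [div_mul_div_comm, one_mul]]
  ring
end

section
/- Local version of Gronwall's inequality: Let T, T₀, σ, c₀ be positive constants, h ∈ L¹(T₀,T) with h ≥ 0 a.e. on [T₀,T], and f ∈ C¹[T₀,T] with f ≥ 0 satisfying f'(t) ≤ h(t) + c₀ f(t)^{1+σ}. Define H(t) = f(T₀) + ∫_{T₀}^t h(s) ds. Suppose there exists t₀ ∈ [T₀,T] with σ c₀ H(t₀)^σ (t₀ - T₀) < 1. Then f(t) ≤ H(t) (1 - σ c₀ H(t)^σ (t - T₀))^{-1/σ} for all t ∈ [T₀, t₀]. -/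
open MeasureTheory Set
open Topology Filter


lemma gronwall_aux (T₀ σ c₀ K t : ℝ) (hσ : 0 < σ) (hc₀ : 0 < c₀) (hK : 0 < K)
    (f : ℝ → ℝ) (hT₀t : T₀ ≤ t)
    (hf_cont : ContinuousOn f (Icc T₀ t))
    (hf_nonneg : ∀ s ∈ Icc T₀ t, 0 ≤ f s)
    (hfg : ∀ s ∈ Icc T₀ t, f s ≤ K + c₀ * ∫ u in T₀..s, f u ^ (1 + σ))
    (hpos : 0 < 1 - σ * c₀ * K ^ σ * (t - T₀)) :
    f t ≤ K * (1 - σ * c₀ * K ^ σ * (t - T₀)) ^ (-(1 / σ)) := by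
  set q : ℝ → ℝ := fun u => f u ^ (1 + σ) with hq
  have hq_cont : ContinuousOn q (Icc T₀ t) :=
    hf_cont.rpow_const (fun s hs => Or.inr (by linarith))
  set G : ℝ → ℝ := fun s => ∫ u in T₀..s, q u with hGdef
  set g : ℝ → ℝ := fun s => K + c₀ * G s with hgdef
  have hG_cont : ContinuousOn G (Icc T₀ t) := by
    have := intervalIntegral.continuousOn_primitive_interval
      (f := q) (μ := volume) (a := T₀) (b := t)
      (by rw [uIcc_of_le hT₀t]; exact (hq_cont.mono Subset.rfl).integrableOn_compact isCompact_Icc)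
    rwa [uIcc_of_le hT₀t] at this
  have hG_nonneg : ∀ s ∈ Icc T₀ t, 0 ≤ G s := by
    intro s hs
    exact intervalIntegral.integral_nonneg hs.1 (fun u hu =>
      Real.rpow_nonneg (hf_nonneg u ⟨hu.1, hu.2.trans hs.2⟩) _)
  have hg_pos : ∀ s ∈ Icc T₀ t, 0 < g s := by
    intro s hs
    have := hG_nonneg s hs
    have : 0 ≤ c₀ * G s := mul_nonneg hc₀.le this
    simp only [hgdef]; linarith
  have hg_cont : ContinuousOn g (Icc T₀ t) :=
    continuousOn_const.add (continuousOn_const.mul hG_cont)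
  have hfg' : ∀ s ∈ Icc T₀ t, f s ≤ g s := hfg
  have hgderiv : ∀ x ∈ Ioo T₀ t, HasDerivAt g (c₀ * q x) x := by
    intro x hx
    have hInt : IntervalIntegrable q volume T₀ x :=
      (hq_cont.mono (by rw [uIcc_of_le hx.1.le]; exact Icc_subset_Icc le_rfl hx.2.le)).intervalIntegrable
    have hmeas : StronglyMeasurableAtFilter q (𝓝 x) :=
      ⟨Icc T₀ t, Icc_mem_nhds hx.1 hx.2, hq_cont.aestronglyMeasurable measurableSet_Icc⟩
    have hcontAt : ContinuousAt q x :=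
      (hq_cont x ⟨hx.1.le, hx.2.le⟩).continuousAt (Icc_mem_nhds hx.1 hx.2)
    have hG : HasDerivAt G (q x) x :=
      intervalIntegral.integral_hasDerivAt_right hInt hmeas hcontAt
    exact (hG.const_mul c₀).const_add K
  set φ : ℝ → ℝ := fun s => g s ^ (-σ) + σ * c₀ * (s - T₀) with hφdef
  have hφderiv : ∀ x ∈ Ioo T₀ t, HasDerivAt φ
      ((c₀ * q x) * (-σ) * g x ^ (-σ - 1) + σ * c₀) x := by
    intro x hx
    have h1 : HasDerivAt (fun s => g s ^ (-σ))
        ((c₀ * q x) * (-σ) * g x ^ (-σ - 1)) x :=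
      (hgderiv x hx).rpow_const (Or.inl (hg_pos x ⟨hx.1.le, hx.2.le⟩).ne')
    have h2 : HasDerivAt (fun s => σ * c₀ * (s - T₀)) (σ * c₀) x := by
      simpa using ((hasDerivAt_id x).sub_const T₀).const_mul (σ * c₀)
    exact h1.add h2
  have hφ'_nonneg : ∀ x ∈ Ioo T₀ t, 0 ≤ (c₀ * q x) * (-σ) * g x ^ (-σ - 1) + σ * c₀ := by
    intro x hx
    have hxI : x ∈ Icc T₀ t := ⟨hx.1.le, hx.2.le⟩
    have hgx := hg_pos x hxI
    have hfx := hf_nonneg x hxI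
    have hq1 : q x ≤ g x ^ (1 + σ) :=
      Real.rpow_le_rpow hfx (hfg' x hxI) (by linarith)
    have hA : (0:ℝ) ≤ g x ^ (-σ - 1) := Real.rpow_nonneg hgx.le _
    have hmul : q x * g x ^ (-σ - 1) ≤ 1 := by
      calc q x * g x ^ (-σ - 1) ≤ g x ^ (1 + σ) * g x ^ (-σ - 1) :=
            mul_le_mul_of_nonneg_right hq1 hA
        _ = g x ^ ((1 + σ) + (-σ - 1)) := (Real.rpow_add hgx _ _).symm
        _ = 1 := by rw [show (1 + σ) + (-σ - 1) = 0 by ring, Real.rpow_zero]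
    nlinarith [mul_le_mul_of_nonneg_left hmul (mul_pos hσ hc₀).le]
  have hφ_cont : ContinuousOn φ (Icc T₀ t) := by
    refine ContinuousOn.add ?_ (Continuous.continuousOn (by continuity))
    exact hg_cont.rpow_const (fun s hs => Or.inl (hg_pos s hs).ne')
  have hmono : MonotoneOn φ (Icc T₀ t) := by
    apply monotoneOn_of_hasDerivWithinAt_nonneg (convex_Icc _ _) hφ_cont
    · intro x hx
      rw [interior_Icc] at hx ⊢
      exact (hφderiv x hx).hasDerivWithinAt
    · intro x hx
      rw [interior_Icc] at hx
      exact hφ'_nonneg x hx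
  have hstep : φ T₀ ≤ φ t :=
    hmono (left_mem_Icc.2 hT₀t) (right_mem_Icc.2 hT₀t) hT₀t
  have hgT₀ : g T₀ = K := by simp [hgdef, hGdef]
  have hφT₀ : φ T₀ = K ^ (-σ) := by simp [hφdef, hgT₀]
  have hkey : K ^ (-σ) - σ * c₀ * (t - T₀) ≤ g t ^ (-σ) := by
    have := hstep
    rw [hφT₀] at this
    simp only [hφdef] at this
    linarith
  set A : ℝ := K ^ (-σ) - σ * c₀ * (t - T₀) with hAdef
  have hAeq : A = K ^ (-σ) * (1 - σ * c₀ * K ^ σ * (t - T₀)) := by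
    have : K ^ (-σ) * K ^ σ = 1 := by
      rw [← Real.rpow_add hK]; norm_num
    rw [hAdef]; linear_combination (σ * c₀ * (t - T₀)) * this
  have hKσpos : (0:ℝ) < K ^ (-σ) := Real.rpow_pos_of_pos hK _
  have hApos : 0 < A := by rw [hAeq]; exact mul_pos hKσpos hpos
  have hgt_pos : 0 < g t := hg_pos t (right_mem_Icc.2 hT₀t)
  have hrpow : (g t ^ (-σ)) ^ (-(1/σ)) ≤ A ^ (-(1/σ)) :=
    Real.rpow_le_rpow_of_nonpos hApos hkey (neg_nonpos.2 (by positivity))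
  have hgid : (g t ^ (-σ)) ^ (-(1/σ)) = g t := by
    rw [← Real.rpow_mul hgt_pos.le]
    rw [show (-σ) * (-(1/σ)) = 1 by field_simp, Real.rpow_one]
  have hKid : (K ^ (-σ)) ^ (-(1/σ)) = K := by
    rw [← Real.rpow_mul hK.le]
    rw [show (-σ) * (-(1/σ)) = 1 by field_simp, Real.rpow_one]
  have hAfin : A ^ (-(1/σ)) = K * (1 - σ * c₀ * K ^ σ * (t - T₀)) ^ (-(1/σ)) := by
    rw [hAeq, Real.mul_rpow hKσpos.le hpos.le, hKid]
  calc f t ≤ g t := hfg' t (right_mem_Icc.2 hT₀t)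
    _ = (g t ^ (-σ)) ^ (-(1/σ)) := hgid.symm
    _ ≤ A ^ (-(1/σ)) := hrpow
    _ = K * (1 - σ * c₀ * K ^ σ * (t - T₀)) ^ (-(1/σ)) := hAfin
set_option maxHeartbeats 1000000 in
/-- Lemma 2.2: local version of Gronwall's inequality. -/
theorem stmt1 (T T₀ σ c₀ : ℝ) (hT₀ : 0 < T₀) (hTT : T₀ < T) (hσ : 0 < σ) (hc₀ : 0 < c₀)
    (h f f' : ℝ → ℝ)
    (hh_int : IntegrableOn h (Icc T₀ T))
    (hh_nonneg : ∀ᵐ t ∂(volume.restrict (Icc T₀ T)), 0 ≤ h t)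
    (hf_deriv : ∀ t ∈ Icc T₀ T, HasDerivWithinAt f (f' t) (Icc T₀ T) t)
    (hf'_cont : ContinuousOn f' (Icc T₀ T))
    (hf_nonneg : ∀ t ∈ Icc T₀ T, 0 ≤ f t)
    (hineq : ∀ t ∈ Icc T₀ T, f' t ≤ h t + c₀ * f t ^ (1 + σ))
    (H : ℝ → ℝ) (hH : ∀ t, H t = f T₀ + ∫ s in T₀..t, h s)
    (t₀ : ℝ) (ht₀ : t₀ ∈ Icc T₀ T)
    (hsmall : σ * c₀ * H t₀ ^ σ * (t₀ - T₀) < 1) :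
    ∀ t ∈ Icc T₀ t₀, f t ≤ H t * (1 - σ * c₀ * H t ^ σ * (t - T₀)) ^ (-(1 / σ)) := by
  intro t ht
  have htT : t ∈ Icc T₀ T := ⟨ht.1, ht.2.trans ht₀.2⟩
  have hf_cont : ContinuousOn f (Icc T₀ T) := fun s hs =>
    (hf_deriv s hs).continuousWithinAt
  have hq_cont : ContinuousOn (fun u => f u ^ (1 + σ)) (Icc T₀ T) :=
    hf_cont.rpow_const (fun s hs => Or.inr (by linarith))
  -- interval integrability of h on subintervals
  have hh_ii : ∀ a b : ℝ, T₀ ≤ a → a ≤ b → b ≤ T → IntervalIntegrable h volume a b := by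
    intro a b h1 h2 h3
    have h4 : IntegrableOn h (uIcc a b) := by
      rw [uIcc_of_le h2]
      exact hh_int.mono_set (Icc_subset_Icc h1 h3)
    exact h4.intervalIntegrable
  -- H is monotone on [T₀, T]
  have hH_mono : ∀ a b : ℝ, T₀ ≤ a → a ≤ b → b ≤ T → H a ≤ H b := by
    intro a b h1 h2 h3
    rw [hH a, hH b]
    have hsplit : (∫ s in T₀..a, h s) + ∫ s in a..b, h s = ∫ s in T₀..b, h s :=
      intervalIntegral.integral_add_adjacent_intervals
        (hh_ii T₀ a le_rfl h1 (h2.trans h3)) (hh_ii a b h1 h2 h3)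
    have hnn : 0 ≤ ∫ s in a..b, h s := by
      apply intervalIntegral.integral_nonneg_of_ae_restrict h2
      have hsub : Icc a b ⊆ Icc T₀ T := Icc_subset_Icc h1 h3
      exact ae_restrict_of_ae_restrict_of_subset hsub hh_nonneg
    linarith
  have hH_nonneg : 0 ≤ H T₀ := by
    rw [hH T₀]; simp [hf_nonneg T₀ ⟨le_rfl, hTT.le⟩]
  have hHt_nonneg : 0 ≤ H t := hH_nonneg.trans (hH_mono T₀ t le_rfl ht.1 htT.2)
  have hHtt₀ : H t ≤ H t₀ := hH_mono t t₀ ht.1 ht.2 ht₀.2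
  have hHt₀_nonneg : 0 ≤ H t₀ := hHt_nonneg.trans hHtt₀
  -- the key integral inequality
  have hkey : ∀ s ∈ Icc T₀ t, f s ≤ H s + c₀ * ∫ u in T₀..s, f u ^ (1 + σ) := by
    intro s hs
    have hsT : s ∈ Icc T₀ T := ⟨hs.1, hs.2.trans htT.2⟩
    have hsubIcc : Icc T₀ s ⊆ Icc T₀ T := Icc_subset_Icc le_rfl hsT.2
    have hint_f' : IntervalIntegrable f' volume T₀ s :=
      (hf'_cont.mono (by rwa [uIcc_of_le hs.1])).intervalIntegrable
    have hint_q : IntervalIntegrable (fun u => f u ^ (1 + σ)) volume T₀ s :=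
      (hq_cont.mono (by rwa [uIcc_of_le hs.1])).intervalIntegrable
    have hint_h : IntervalIntegrable h volume T₀ s := hh_ii T₀ s le_rfl hs.1 hsT.2
    have hFTC : ∫ u in T₀..s, f' u = f s - f T₀ := by
      apply intervalIntegral.integral_eq_sub_of_hasDeriv_right_of_le hs.1
        (hf_cont.mono hsubIcc) ?_ hint_f'
      intro x hx
      exact (hf_deriv x (hsubIcc ⟨hx.1.le, hx.2.le⟩)).mono_of_mem_nhdsWithin
        (Icc_mem_nhdsGT_of_mem ⟨hx.1.le, hx.2.trans_le hsT.2⟩)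
    have hmono_int : (∫ u in T₀..s, f' u) ≤ ∫ u in T₀..s, (h u + c₀ * f u ^ (1 + σ)) := by
      apply intervalIntegral.integral_mono_on hs.1 hint_f'
        (hint_h.add (hint_q.const_mul c₀))
      intro x hx
      exact hineq x (hsubIcc hx)
    rw [intervalIntegral.integral_add hint_h (hint_q.const_mul c₀),
      intervalIntegral.integral_const_mul] at hmono_int
    rw [hFTC] at hmono_int
    rw [hH s]
    linarith
  -- pass to the limit ε → 0⁺
  have hΔt_pos : 0 < 1 - σ * c₀ * H t ^ σ * (t - T₀) := by
    have h1 : H t ^ σ ≤ H t₀ ^ σ := Real.rpow_le_rpow hHt_nonneg hHtt₀ hσ.le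
    have h2 : σ * c₀ * H t ^ σ * (t - T₀) ≤ σ * c₀ * H t₀ ^ σ * (t₀ - T₀) := by
      have hnn1 : 0 ≤ H t ^ σ := Real.rpow_nonneg hHt_nonneg _
      have h3 : t - T₀ ≤ t₀ - T₀ := by linarith [ht.2]
      have h4 : 0 ≤ t - T₀ := by linarith [ht.1]
      have e1 : σ * c₀ * H t ^ σ * (t - T₀) ≤ σ * c₀ * H t₀ ^ σ * (t - T₀) :=
        mul_le_mul_of_nonneg_right (mul_le_mul_of_nonneg_left h1 (mul_pos hσ hc₀).le) h4
      have e2 : σ * c₀ * H t₀ ^ σ * (t - T₀) ≤ σ * c₀ * H t₀ ^ σ * (t₀ - T₀) :=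
        mul_le_mul_of_nonneg_left h3
          (mul_nonneg (mul_nonneg hσ.le hc₀.le) (Real.rpow_nonneg hHt₀_nonneg _))
      linarith
    linarith
  set L := H t * (1 - σ * c₀ * H t ^ σ * (t - T₀)) ^ (-(1 / σ)) with hL
  have h1 : Tendsto (fun ε : ℝ => H t + ε) (𝓝[>] 0) (𝓝 (H t)) := by
    have : Tendsto (fun ε : ℝ => H t + ε) (𝓝 0) (𝓝 (H t + 0)) :=
      (continuous_const.add continuous_id).tendsto 0
    rw [add_zero] at this
    exact this.mono_left nhdsWithin_le_nhds
  have hrpowcont : ∀ x : ℝ, 0 ≤ x → ContinuousAt (fun y : ℝ => y ^ σ) x := by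
    intro x hx
    rcases eq_or_lt_of_le hx with hx' | hx'
    · exact Real.continuousAt_rpow_const _ _ (Or.inr hσ.le)
    · exact Real.continuousAt_rpow_const _ _ (Or.inl hx'.ne')
  have h2 : Tendsto (fun ε : ℝ => (H t + ε) ^ σ) (𝓝[>] 0) (𝓝 (H t ^ σ)) :=
    (hrpowcont (H t) hHt_nonneg).tendsto.comp h1
  have h3 : Tendsto (fun ε : ℝ => 1 - σ * c₀ * (H t + ε) ^ σ * (t - T₀)) (𝓝[>] 0)
      (𝓝 (1 - σ * c₀ * H t ^ σ * (t - T₀))) := by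
    have := ((h2.const_mul (σ * c₀)).mul_const (t - T₀)).const_sub 1
    convert this using 2 <;> ring
  have h4 : Tendsto (fun ε : ℝ => (1 - σ * c₀ * (H t + ε) ^ σ * (t - T₀)) ^ (-(1/σ)))
      (𝓝[>] 0) (𝓝 ((1 - σ * c₀ * H t ^ σ * (t - T₀)) ^ (-(1/σ)))) :=
    (Real.continuousAt_rpow_const _ _ (Or.inl hΔt_pos.ne')).tendsto.comp h3
  have hF : Tendsto (fun ε : ℝ =>
      (H t + ε) * (1 - σ * c₀ * (H t + ε) ^ σ * (t - T₀)) ^ (-(1/σ))) (𝓝[>] 0) (𝓝 L) :=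
    h1.mul h4
  -- eventual bound via aux lemma
  have h2' : Tendsto (fun ε : ℝ => (H t₀ + ε) ^ σ) (𝓝[>] 0) (𝓝 (H t₀ ^ σ)) := by
    have h1' : Tendsto (fun ε : ℝ => H t₀ + ε) (𝓝[>] 0) (𝓝 (H t₀)) := by
      have : Tendsto (fun ε : ℝ => H t₀ + ε) (𝓝 0) (𝓝 (H t₀ + 0)) :=
        (continuous_const.add continuous_id).tendsto 0
      rw [add_zero] at this
      exact this.mono_left nhdsWithin_le_nhds
    exact (hrpowcont (H t₀) hHt₀_nonneg).tendsto.comp h1'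
  have h3' : Tendsto (fun ε : ℝ => σ * c₀ * (H t₀ + ε) ^ σ * (t₀ - T₀)) (𝓝[>] 0)
      (𝓝 (σ * c₀ * H t₀ ^ σ * (t₀ - T₀))) :=
    (h2'.const_mul (σ * c₀)).mul_const (t₀ - T₀)
  have hev1 : ∀ᶠ ε in 𝓝[>] (0:ℝ), σ * c₀ * (H t₀ + ε) ^ σ * (t₀ - T₀) < 1 :=
    h3'.eventually_lt_const hsmall
  have hEv : ∀ᶠ ε in 𝓝[>] (0:ℝ),
      f t ≤ (H t + ε) * (1 - σ * c₀ * (H t + ε) ^ σ * (t - T₀)) ^ (-(1/σ)) := by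
    filter_upwards [hev1, self_mem_nhdsWithin] with ε hε1 hε2
    have hε2' : (0:ℝ) < ε := hε2
    have hKpos : 0 < H t + ε := by linarith
    have hpos' : 0 < 1 - σ * c₀ * (H t + ε) ^ σ * (t - T₀) := by
      have hKle : H t + ε ≤ H t₀ + ε := by linarith
      have hb1 : (H t + ε) ^ σ ≤ (H t₀ + ε) ^ σ :=
        Real.rpow_le_rpow hKpos.le hKle hσ.le
      have hnn1 : 0 ≤ (H t + ε) ^ σ := Real.rpow_nonneg hKpos.le _
      have h3 : t - T₀ ≤ t₀ - T₀ := by linarith [ht.2]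
      have h4 : 0 ≤ t - T₀ := by linarith [ht.1]
      have e1 : σ * c₀ * (H t + ε) ^ σ * (t - T₀) ≤ σ * c₀ * (H t₀ + ε) ^ σ * (t - T₀) :=
        mul_le_mul_of_nonneg_right (mul_le_mul_of_nonneg_left hb1 (mul_pos hσ hc₀).le) h4
      have e2 : σ * c₀ * (H t₀ + ε) ^ σ * (t - T₀) ≤ σ * c₀ * (H t₀ + ε) ^ σ * (t₀ - T₀) :=
        mul_le_mul_of_nonneg_left h3
          (mul_nonneg (mul_nonneg hσ.le hc₀.le) (Real.rpow_nonneg (by linarith) _))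
      linarith
    apply gronwall_aux T₀ σ c₀ (H t + ε) t hσ hc₀ hKpos f ht.1
      (hf_cont.mono (Icc_subset_Icc le_rfl htT.2))
      (fun s hs => hf_nonneg s ⟨hs.1, hs.2.trans htT.2⟩) ?_ hpos'
    intro s hs
    have := hkey s hs
    have hHs : H s ≤ H t := hH_mono s t hs.1 hs.2 htT.2
    linarith
  exact ge_of_tendsto hF hEv
end

section
/- Let q ∈ (1,2) and set β = (q−1)²/(2(q+1)). For any fixed η > 1 and integer k > 2, one has 1 / ( (k − η^{−β})^{(q−1)/(q+1)} + ((q−1)/(q+1)) (η^{β})^{4q/((q−1)(q+1))} k^{(q+1)/(q−1)} (η^{β} k − 1)^{2q/(q+1)} )^{(q+1)/(q(q−1))} ≥ ((q+1)/(2q))^{(q+1)/(q(q−1))} · 1 / ( k^{1/q} (1 + k^{(q²+4q−1)/(q−1)²} (η^{β})^{2(q+1)/(q−1)²}) ). -/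
set_option maxHeartbeats 1000000 in
lemma stmt9_aux (q E K : ℝ) (hq1 : 1 < q) (hq2 : q < 2) (hE : 1 ≤ E) (hK : 3 ≤ K) :
    (K - E⁻¹) ^ ((q - 1) / (q + 1)) +
      (q - 1) / (q + 1) * E ^ (4 * q / ((q - 1) * (q + 1))) * K ^ ((q + 1) / (q - 1)) *
        (E * K - 1) ^ (2 * q / (q + 1))
    ≤ 2 * q / (q + 1) *
      (K ^ (1 / q) * (1 + K ^ ((q ^ 2 + 4 * q - 1) / (q - 1) ^ 2) *
        E ^ (2 * (q + 1) / (q - 1) ^ 2))) ^ (q * (q - 1) / (q + 1)) := by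
  have hq0 : (0:ℝ) < q := by linarith
  have ht : (0:ℝ) < q - 1 := by linarith
  have hqp : (0:ℝ) < q + 1 := by linarith
  have hE0 : (0:ℝ) < E := by linarith
  have hK0 : (0:ℝ) < K := by linarith
  have hK1 : (1:ℝ) ≤ K := by linarith
  have hEK : (1:ℝ) ≤ E * K := by nlinarith
  have hEK0 : (0:ℝ) < E * K := by nlinarith
  set u := 2 * q / (q - 1) with hu
  have hu0 : 0 < u := by positivity
  set X := K ^ ((q ^ 2 + 4 * q - 1) / (q - 1) ^ 2) * E ^ (2 * (q + 1) / (q - 1) ^ 2) with hX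
  have hX0 : 0 < X := by
    apply mul_pos (Real.rpow_pos_of_pos hK0 _) (Real.rpow_pos_of_pos hE0 _)
  set s := q * (q - 1) / (q + 1) with hs
  have hs0 : 0 < s := by positivity
  set Y := (1 + X) ^ s with hY
  have hYge : (E * K) ^ u ≤ Y := by
    have h1 : X ^ s ≤ (1 + X) ^ s := Real.rpow_le_rpow hX0.le (by linarith) hs0.le
    have e1 : X ^ s = K ^ ((q ^ 2 + 4 * q - 1) / (q - 1) ^ 2 * s) *
        E ^ (2 * (q + 1) / (q - 1) ^ 2 * s) := by
      rw [hX, Real.mul_rpow (Real.rpow_nonneg hK0.le _) (Real.rpow_nonneg hE0.le _),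
        ← Real.rpow_mul hK0.le, ← Real.rpow_mul hE0.le]
    have e2 : 2 * (q + 1) / (q - 1) ^ 2 * s = u := by
      rw [hs, hu]; field_simp
    have e3 : u ≤ (q ^ 2 + 4 * q - 1) / (q - 1) ^ 2 * s := by
      rw [hs, hu, div_mul_div_comm, div_le_div_iff₀ (by positivity) (by positivity)]
      nlinarith [mul_pos hq0 (mul_pos (mul_pos ht (mul_pos ht ht))
        (show (0:ℝ) < q + 3 by linarith))]
    have h2 : (E * K) ^ u ≤ X ^ s := by
      rw [e1, e2]
      calc (E * K) ^ u = E ^ u * K ^ u := Real.mul_rpow hE0.le hK0.le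
        _ ≤ E ^ u * K ^ ((q ^ 2 + 4 * q - 1) / (q - 1) ^ 2 * s) := by
            apply mul_le_mul_of_nonneg_left
              (Real.rpow_le_rpow_of_exponent_le hK1 e3) (Real.rpow_nonneg hE0.le _)
        _ = K ^ ((q ^ 2 + 4 * q - 1) / (q - 1) ^ 2 * s) * E ^ u := by ring
    exact le_trans h2 h1
  -- lower bound on Y: Y ≥ 3 ^ u ≥ u + 1
  have hlog3 : (1:ℝ) < Real.log 3 := by
    rw [Real.lt_log_iff_exp_lt (by norm_num)]
    calc Real.exp 1 < 2.7182818286 := Real.exp_one_lt_d9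
      _ < 3 := by norm_num
  have h3u : u + 1 ≤ (3:ℝ) ^ u := by
    rw [Real.rpow_def_of_pos (by norm_num)]
    calc u + 1 ≤ Real.log 3 * u + 1 := by nlinarith
      _ ≤ Real.exp (Real.log 3 * u) := Real.add_one_le_exp _
  have hY3 : (3:ℝ) ^ u ≤ Y := by
    refine le_trans (Real.rpow_le_rpow (by norm_num) ?_ hu0.le) hYge
    nlinarith
  have hii : 1 ≤ (q - 1) / (q + 1) * Y := by
    have h3 : (q - 1) * (u + 1) = 3 * q - 1 := by rw [hu]; field_simp; ring
    have h4 : q + 1 ≤ (q - 1) * Y := by nlinarith [le_trans h3u hY3]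
    rw [div_mul_eq_mul_div, le_div_iff₀ hqp, one_mul]
    linarith
  have step2 : 1 + (E * K) ^ u ≤ 2 * q / (q + 1) * Y := by
    have e5 : 2 * q / (q + 1) * Y = Y + (q - 1) / (q + 1) * Y := by field_simp; ring
    rw [e5]; linarith
  -- step 1 : bound A
  have hEi : E⁻¹ ≤ 1 := by
    nlinarith [mul_inv_cancel₀ (ne_of_gt hE0), inv_pos.mpr hE0]
  have term1 : (K - E⁻¹) ^ ((q - 1) / (q + 1)) ≤ K ^ ((q - 1) / (q + 1)) :=
    Real.rpow_le_rpow (by linarith) (by nlinarith [inv_pos.mpr hE0]) (by positivity)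
  have t2a : (E * K - 1) ^ (2 * q / (q + 1)) ≤ (E * K) ^ (2 * q / (q + 1)) :=
    Real.rpow_le_rpow (by linarith) (by linarith) (by positivity)
  have e4 : E ^ (4 * q / ((q - 1) * (q + 1))) * K ^ ((q + 1) / (q - 1)) *
      (E * K) ^ (2 * q / (q + 1)) = K ^ ((q - 1) / (q + 1)) * (E * K) ^ u := by
    rw [Real.mul_rpow hE0.le hK0.le, Real.mul_rpow hE0.le hK0.le]
    rw [show E ^ (4 * q / ((q - 1) * (q + 1))) * K ^ ((q + 1) / (q - 1)) *
        (E ^ (2 * q / (q + 1)) * K ^ (2 * q / (q + 1)))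
        = (E ^ (4 * q / ((q - 1) * (q + 1))) * E ^ (2 * q / (q + 1))) *
          (K ^ ((q + 1) / (q - 1)) * K ^ (2 * q / (q + 1))) from by ring]
    rw [← Real.rpow_add hE0, ← Real.rpow_add hK0]
    rw [show K ^ ((q - 1) / (q + 1)) * (E ^ u * K ^ u)
        = E ^ u * (K ^ ((q - 1) / (q + 1)) * K ^ u) from by ring]
    rw [← Real.rpow_add hK0]
    congr 1
    · congr 1; rw [hu]; field_simp; ring
    · congr 1; rw [hu]; field_simp; ring
  have hfrac : (q - 1) / (q + 1) ≤ 1 := by rw [div_le_one hqp]; linarith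
  have t2 : (q - 1) / (q + 1) * E ^ (4 * q / ((q - 1) * (q + 1))) * K ^ ((q + 1) / (q - 1)) *
      (E * K - 1) ^ (2 * q / (q + 1)) ≤ K ^ ((q - 1) / (q + 1)) * (E * K) ^ u := by
    calc (q - 1) / (q + 1) * E ^ (4 * q / ((q - 1) * (q + 1))) * K ^ ((q + 1) / (q - 1)) *
        (E * K - 1) ^ (2 * q / (q + 1))
        ≤ 1 * E ^ (4 * q / ((q - 1) * (q + 1))) * K ^ ((q + 1) / (q - 1)) *
          (E * K) ^ (2 * q / (q + 1)) := by
          apply mul_le_mul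
          · apply mul_le_mul (by apply mul_le_mul hfrac le_rfl (Real.rpow_nonneg hE0.le _) (by norm_num))
              le_rfl (Real.rpow_nonneg hK0.le _)
            positivity
          · exact t2a
          · exact Real.rpow_nonneg (by linarith) _
          · positivity
      _ = K ^ ((q - 1) / (q + 1)) * (E * K) ^ u := by rw [one_mul, e4]
  have eD : (K ^ (1 / q) * (1 + X)) ^ s = K ^ ((q - 1) / (q + 1)) * Y := by
    rw [Real.mul_rpow (Real.rpow_nonneg hK0.le _) (by linarith), ← Real.rpow_mul hK0.le, hY]
    congr 2
    rw [hs]; field_simp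
  calc (K - E⁻¹) ^ ((q - 1) / (q + 1)) +
      (q - 1) / (q + 1) * E ^ (4 * q / ((q - 1) * (q + 1))) * K ^ ((q + 1) / (q - 1)) *
        (E * K - 1) ^ (2 * q / (q + 1))
      ≤ K ^ ((q - 1) / (q + 1)) * (1 + (E * K) ^ u) := by
        have expand : K ^ ((q - 1) / (q + 1)) * (1 + (E * K) ^ u)
            = K ^ ((q - 1) / (q + 1)) + K ^ ((q - 1) / (q + 1)) * (E * K) ^ u := by ring
        rw [expand]; exact add_le_add term1 t2
    _ ≤ K ^ ((q - 1) / (q + 1)) * (2 * q / (q + 1) * Y) :=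
        mul_le_mul_of_nonneg_left step2 (Real.rpow_nonneg hK0.le _)
    _ = 2 * q / (q + 1) * (K ^ (1 / q) * (1 + X)) ^ s := by rw [eD]; ring

/-- Pointwise lower bound (5.47) used in the divergence argument. -/
theorem stmt9 (q : ℝ) (hq1 : 1 < q) (hq2 : q < 2)
    (β : ℝ) (hβ : β = (q - 1) ^ 2 / (2 * (q + 1)))
    (η : ℝ) (hη : 1 < η) (k : ℤ) (hk : 2 < k) :
    ((q + 1) / (2 * q)) ^ ((q + 1) / (q * (q - 1))) *
        (1 / ((k : ℝ) ^ (1 / q) *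
          (1 + (k : ℝ) ^ ((q ^ 2 + 4 * q - 1) / (q - 1) ^ 2) *
            (η ^ β) ^ (2 * (q + 1) / (q - 1) ^ 2)))) ≤
      1 / ((((k : ℝ) - η ^ (-β)) ^ ((q - 1) / (q + 1)) +
          ((q - 1) / (q + 1)) * (η ^ β) ^ (4 * q / ((q - 1) * (q + 1))) *
            (k : ℝ) ^ ((q + 1) / (q - 1)) * (η ^ β * (k : ℝ) - 1) ^ (2 * q / (q + 1))) ^
        ((q + 1) / (q * (q - 1)))) := by
  have hq0 : (0:ℝ) < q := by linarith
  have ht : (0:ℝ) < q - 1 := by linarith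
  have hqp : (0:ℝ) < q + 1 := by linarith
  have hβ0 : 0 < β := by rw [hβ]; positivity
  have hη0 : (0:ℝ) < η := by linarith
  have hE1 : (1:ℝ) ≤ η ^ β := Real.one_le_rpow hη.le hβ0.le
  have hK3 : (3:ℝ) ≤ (k:ℝ) := by exact_mod_cast hk
  have hE0 : (0:ℝ) < η ^ β := by linarith
  have hK0 : (0:ℝ) < (k:ℝ) := by linarith
  rw [Real.rpow_neg hη0.le]
  set E := η ^ β with hEdef
  set K := (k:ℝ) with hKdef
  have key := stmt9_aux q E K hq1 hq2 hE1 hK3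
  set p := (q + 1) / (q * (q - 1)) with hp
  have hp0 : 0 < p := by positivity
  set A := (K - E⁻¹) ^ ((q - 1) / (q + 1)) +
      (q - 1) / (q + 1) * E ^ (4 * q / ((q - 1) * (q + 1))) * K ^ ((q + 1) / (q - 1)) *
        (E * K - 1) ^ (2 * q / (q + 1)) with hA
  set D := K ^ (1 / q) * (1 + K ^ ((q ^ 2 + 4 * q - 1) / (q - 1) ^ 2) *
      E ^ (2 * (q + 1) / (q - 1) ^ 2)) with hD
  have hEi : E⁻¹ ≤ 1 := by
    nlinarith [mul_inv_cancel₀ (ne_of_gt hE0), inv_pos.mpr hE0]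
  have hD0 : 0 < D := by
    rw [hD]
    have := Real.rpow_pos_of_pos hK0 (1/q)
    have h1 : 0 < K ^ ((q ^ 2 + 4 * q - 1) / (q - 1) ^ 2) * E ^ (2 * (q + 1) / (q - 1) ^ 2) :=
      mul_pos (Real.rpow_pos_of_pos hK0 _) (Real.rpow_pos_of_pos hE0 _)
    nlinarith
  have hA0 : 0 < A := by
    rw [hA]
    have h1 : 0 < (K - E⁻¹) ^ ((q - 1) / (q + 1)) :=
      Real.rpow_pos_of_pos (by linarith) _
    have h2 : 0 ≤ (q - 1) / (q + 1) * E ^ (4 * q / ((q - 1) * (q + 1))) *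
        K ^ ((q + 1) / (q - 1)) * (E * K - 1) ^ (2 * q / (q + 1)) := by
      apply mul_nonneg (mul_nonneg (mul_nonneg (by positivity)
        (Real.rpow_nonneg hE0.le _)) (Real.rpow_nonneg hK0.le _))
        (Real.rpow_nonneg (by nlinarith) _)
    linarith
  have hsp : q * (q - 1) / (q + 1) * p = 1 := by rw [hp]; field_simp
  have key2 : A ^ p ≤ (2 * q / (q + 1)) ^ p * D := by
    calc A ^ p ≤ (2 * q / (q + 1) * D ^ (q * (q - 1) / (q + 1))) ^ p :=
          Real.rpow_le_rpow hA0.le key hp0.le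
      _ = (2 * q / (q + 1)) ^ p * (D ^ (q * (q - 1) / (q + 1))) ^ p :=
          Real.mul_rpow (by positivity) (Real.rpow_nonneg hD0.le _)
      _ = (2 * q / (q + 1)) ^ p * D := by
          rw [← Real.rpow_mul hD0.le, hsp, Real.rpow_one]
  have hAp0 : 0 < A ^ p := Real.rpow_pos_of_pos hA0 _
  have final : 1 / ((2 * q / (q + 1)) ^ p * D) ≤ 1 / A ^ p :=
    one_div_le_one_div_of_le hAp0 key2
  calc ((q + 1) / (2 * q)) ^ p * (1 / D)
      = 1 / ((2 * q / (q + 1)) ^ p * D) := by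
        rw [show (q + 1) / (2 * q) = (2 * q / (q + 1))⁻¹ from (inv_div (2*q) (q+1)).symm,
          Real.inv_rpow (by positivity), one_div, one_div, ← mul_inv]
    _ ≤ 1 / A ^ p := final
end

section
/- Let q ∈ (1,2) and define, for η ≥ 1, h̃(η) = h(2,η)^{(q+1)/(q−1)} where h(2,η) = [ (1 + ((q−1)/(q+1)) 2^{(q+1)/(q−1)}) / ( (2 − η^{−β})^{(q−1)/(q+1)} + ((q−1)/(q+1)) (η^{β})^{4q/((q−1)(q+1))} 2^{(q+1)/(q−1)} (2 η^{β} − 1)^{2q/(q+1)} ) ]^{1/q} and β = (q−1)²/(2(q+1)). Then ∫₁^∞ h̃(η) dη = +∞. -/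
open MeasureTheory

lemma aux_inv_lintegral_top {c : ℝ} (hc : 0 < c) :
    ∫⁻ x in Set.Ici (1 : ℝ), ENNReal.ofReal (c * x⁻¹) = ⊤ := by
  by_contra h
  have hfin : ∫⁻ x in Set.Ici (1 : ℝ), ENNReal.ofReal (c * x⁻¹) < ⊤ := lt_top_iff_ne_top.2 h
  have hint : IntegrableOn (fun x : ℝ => c * x⁻¹) (Set.Ici 1) := by
    refine ⟨(measurable_const.mul measurable_inv).aestronglyMeasurable, ?_⟩
    rw [HasFiniteIntegral]
    have heq : ∫⁻ x in Set.Ici (1 : ℝ), (‖c * x⁻¹‖ₑ : ENNReal)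
        = ∫⁻ x in Set.Ici (1 : ℝ), ENNReal.ofReal (c * x⁻¹) := by
      refine setLIntegral_congr_fun measurableSet_Ici ?_
      intro x hx
      have hx0 : (0 : ℝ) < x := lt_of_lt_of_le one_pos hx
      exact Real.enorm_eq_ofReal (by positivity)
    rw [heq]; exact hfin
  have hinv : IntegrableOn (fun x : ℝ => x⁻¹) (Set.Ioi (1 : ℝ)) := by
    have h1 : IntegrableOn (fun x : ℝ => c * x⁻¹) (Set.Ioi 1) :=
      hint.mono_set Set.Ioi_subset_Ici_self
    have h2 : IntegrableOn (fun x : ℝ => c⁻¹ * (c * x⁻¹)) (Set.Ioi 1) := h1.const_mul _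
    refine h2.congr_fun (fun x _ => ?_) measurableSet_Ioi
    field_simp
  exact not_IntegrableOn_Ioi_inv hinv

/-- (5.48): the integral `∫₁^∞ h(2,η)^{(q+1)/(q-1)} dη` diverges. -/
theorem stmt11 (q : ℝ) (hq1 : 1 < q) (hq2 : q < 2)
    (β : ℝ) (hβ : β = (q - 1) ^ 2 / (2 * (q + 1)))
    (h2 : ℝ → ℝ)
    (hdef : ∀ η : ℝ, h2 η =
      ((1 + ((q - 1) / (q + 1)) * (2 : ℝ) ^ ((q + 1) / (q - 1))) /
        ((2 - η ^ (-β)) ^ ((q - 1) / (q + 1)) +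
          ((q - 1) / (q + 1)) * (η ^ β) ^ (4 * q / ((q - 1) * (q + 1))) *
            (2 : ℝ) ^ ((q + 1) / (q - 1)) * (2 * η ^ β - 1) ^ (2 * q / (q + 1)))) ^ (1 / q)) :
    ∫⁻ η in Set.Ici (1 : ℝ), ENNReal.ofReal (h2 η ^ ((q + 1) / (q - 1))) = ⊤ := by
  have hq0 : (0 : ℝ) < q := by linarith
  have hqm : (0 : ℝ) < q - 1 := by linarith
  have hqp : (0 : ℝ) < q + 1 := by linarith
  have hβpos : 0 < β := by rw [hβ]; positivity
  set p : ℝ := (q + 1) / (q - 1) with hp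
  have hppos : 0 < p := div_pos hqp hqm
  set N : ℝ := 1 + ((q - 1) / (q + 1)) * (2 : ℝ) ^ p with hN
  have hNpos : 0 < N := by
    have : (0 : ℝ) < ((q - 1) / (q + 1)) * (2 : ℝ) ^ p := by positivity
    rw [hN]; linarith
  set K : ℝ := ((q - 1) / (q + 1)) * (2 : ℝ) ^ p * (2 : ℝ) ^ (2 * q / (q + 1)) with hK
  have hKpos : 0 < K := by rw [hK]; positivity
  set a1 : ℝ := β * (4 * q / ((q - 1) * (q + 1))) with ha1
  set a2 : ℝ := β * (2 * q / (q + 1)) with ha2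
  have ha1n : 0 ≤ a1 := by rw [ha1]; positivity
  have ha2n : 0 ≤ a2 := by rw [ha2]; positivity
  set A : ℝ := a1 + a2 with hA
  have hAn : 0 ≤ A := by linarith
  set e : ℝ := (1 / q) * p with he
  have hen : 0 ≤ e := by positivity
  have hAe : A * e = 1 := by
    rw [hA, ha1, ha2, he, hp, hβ]
    field_simp
    ring
  set c : ℝ := (N / (2 + K)) ^ e with hc
  have hcpos : 0 < c := by rw [hc]; positivity
  -- key pointwise bound
  have key : ∀ η : ℝ, 1 ≤ η → c * η⁻¹ ≤ h2 η ^ p := by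
    intro η hη
    have hη0 : (0 : ℝ) < η := lt_of_lt_of_le one_pos hη
    have hmb : η ^ (-β) ≤ 1 :=
      Real.rpow_le_one_of_one_le_of_nonpos hη (by linarith)
    have hmb0 : 0 < η ^ (-β) := Real.rpow_pos_of_pos hη0 _
    have hb1 : 1 ≤ η ^ β := by
      calc (1 : ℝ) = 1 ^ β := (Real.one_rpow β).symm
        _ ≤ η ^ β := Real.rpow_le_rpow zero_le_one hη hβpos.le
    have hηA : 1 ≤ η ^ A := by
      calc (1 : ℝ) = 1 ^ A := (Real.one_rpow A).symm
        _ ≤ η ^ A := Real.rpow_le_rpow zero_le_one hη hAn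
    set D : ℝ := (2 - η ^ (-β)) ^ ((q - 1) / (q + 1)) +
        ((q - 1) / (q + 1)) * (η ^ β) ^ (4 * q / ((q - 1) * (q + 1))) *
          (2 : ℝ) ^ p * (2 * η ^ β - 1) ^ (2 * q / (q + 1)) with hD
    have hterm2nn : 0 ≤ ((q - 1) / (q + 1)) * (η ^ β) ^ (4 * q / ((q - 1) * (q + 1))) *
        (2 : ℝ) ^ p * (2 * η ^ β - 1) ^ (2 * q / (q + 1)) := by
      have h21 : (0 : ℝ) ≤ 2 * η ^ β - 1 := by linarith
      positivity
    have hDpos : 0 < D := by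
      have h1 : (0 : ℝ) < (2 - η ^ (-β)) ^ ((q - 1) / (q + 1)) :=
        Real.rpow_pos_of_pos (by linarith) _
      rw [hD]; linarith
    -- bound term 1
    have ht1 : (2 - η ^ (-β)) ^ ((q - 1) / (q + 1)) ≤ 2 * η ^ A := by
      have h1 : (2 - η ^ (-β)) ^ ((q - 1) / (q + 1)) ≤ (2 : ℝ) ^ ((q - 1) / (q + 1)) :=
        Real.rpow_le_rpow (by linarith) (by linarith) (by positivity)
      have h2 : (2 : ℝ) ^ ((q - 1) / (q + 1)) ≤ (2 : ℝ) ^ (1 : ℝ) :=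
        Real.rpow_le_rpow_of_exponent_le one_le_two
          ((div_le_one hqp).2 (by linarith))
      rw [Real.rpow_one] at h2
      nlinarith
    -- bound term 2
    have heq1 : (η ^ β) ^ (4 * q / ((q - 1) * (q + 1))) = η ^ a1 := by
      rw [ha1, Real.rpow_mul hη0.le]
    have heq2 : (η ^ β) ^ (2 * q / (q + 1)) = η ^ a2 := by
      rw [ha2, Real.rpow_mul hη0.le]
    have ht2a : (2 * η ^ β - 1) ^ (2 * q / (q + 1)) ≤
        (2 : ℝ) ^ (2 * q / (q + 1)) * η ^ a2 := by
      calc (2 * η ^ β - 1) ^ (2 * q / (q + 1))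
          ≤ (2 * η ^ β) ^ (2 * q / (q + 1)) :=
            Real.rpow_le_rpow (by linarith) (by linarith) (by positivity)
        _ = (2 : ℝ) ^ (2 * q / (q + 1)) * (η ^ β) ^ (2 * q / (q + 1)) :=
            Real.mul_rpow (by norm_num) (Real.rpow_nonneg hη0.le _)
        _ = (2 : ℝ) ^ (2 * q / (q + 1)) * η ^ a2 := by rw [heq2]
    have ht2 : ((q - 1) / (q + 1)) * (η ^ β) ^ (4 * q / ((q - 1) * (q + 1))) *
        (2 : ℝ) ^ p * (2 * η ^ β - 1) ^ (2 * q / (q + 1)) ≤ K * η ^ A := by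
      have hC0 : (0 : ℝ) ≤ ((q - 1) / (q + 1)) * η ^ a1 * (2 : ℝ) ^ p := by positivity
      have step : ((q - 1) / (q + 1)) * η ^ a1 * (2 : ℝ) ^ p *
          (2 * η ^ β - 1) ^ (2 * q / (q + 1)) ≤
          ((q - 1) / (q + 1)) * η ^ a1 * (2 : ℝ) ^ p *
          ((2 : ℝ) ^ (2 * q / (q + 1)) * η ^ a2) :=
        mul_le_mul_of_nonneg_left ht2a hC0
      rw [heq1]
      calc ((q - 1) / (q + 1)) * η ^ a1 * (2 : ℝ) ^ p *
          (2 * η ^ β - 1) ^ (2 * q / (q + 1))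
          ≤ ((q - 1) / (q + 1)) * η ^ a1 * (2 : ℝ) ^ p *
            ((2 : ℝ) ^ (2 * q / (q + 1)) * η ^ a2) := step
        _ = K * (η ^ a1 * η ^ a2) := by rw [hK]; ring
        _ = K * η ^ A := by rw [hA, ← Real.rpow_add hη0]
    have hDle : D ≤ (2 + K) * η ^ A := by
      rw [hD]
      calc (2 - η ^ (-β)) ^ ((q - 1) / (q + 1)) +
          ((q - 1) / (q + 1)) * (η ^ β) ^ (4 * q / ((q - 1) * (q + 1))) *
            (2 : ℝ) ^ p * (2 * η ^ β - 1) ^ (2 * q / (q + 1))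
          ≤ 2 * η ^ A + K * η ^ A := add_le_add ht1 ht2
        _ = (2 + K) * η ^ A := by ring
    -- conclude
    have hfr : N / ((2 + K) * η ^ A) ≤ N / D := by
      apply div_le_div_of_nonneg_left hNpos.le hDpos hDle
    have hfr0 : 0 ≤ N / ((2 + K) * η ^ A) := by positivity
    have hrp : (N / ((2 + K) * η ^ A)) ^ e ≤ (N / D) ^ e :=
      Real.rpow_le_rpow hfr0 hfr hen
    have hrhs : h2 η ^ p = (N / D) ^ e := by
      rw [hdef η, ← hD, he, Real.rpow_mul (by positivity : (0:ℝ) ≤ N / D)]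
    have hlhs : (N / ((2 + K) * η ^ A)) ^ e = c * η⁻¹ := by
      have h1 : N / ((2 + K) * η ^ A) = (N / (2 + K)) * η ^ (-A) := by
        rw [Real.rpow_neg hη0.le]
        field_simp
      rw [h1, Real.mul_rpow (by positivity) (Real.rpow_nonneg hη0.le _),
        ← Real.rpow_mul hη0.le, show -A * e = -1 by rw [neg_mul, hAe],
        Real.rpow_neg_one, ← hc]
    rw [hrhs, ← hlhs]
    exact hrp
  -- finish with comparison
  rw [eq_top_iff, ← aux_inv_lintegral_top hcpos]
  refine setLIntegral_mono' measurableSet_Ici ?_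
  intro η hη
  exact ENNReal.ofReal_le_ofReal (key η hη)
end
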